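/- For fixed $b \geq 1$, the function $A(r) = \frac{r(1-r)^{2^b-1}}{1-(1-r)^{2^b}}$ is monotonically decreasing in $r$ on $(0,1)$. -/
import Mathlib


open Set

lemma key_mono (n : ℕ) (hn : 1 ≤ n) {x y : ℝ} (hx : 0 < x) (hxy : x ≤ y) :
    x ^ (n - 1) / ∑ i ∈ Finset.range n, x ^ i ≤
      y ^ (n - 1) / ∑ i ∈ Finset.range n, y ^ i := by
  have hy : 0 < y := hx.trans_le hxy
  have hne : (Finset.range n).Nonempty := Finset.nonempty_range_iff.mpr (by omega)
  have hSx : 0 < ∑ i ∈ Finset.range n, x ^ i :=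
    Finset.sum_pos (fun i _ => pow_pos hx i) hne
  have hSy : 0 < ∑ i ∈ Finset.range n, y ^ i :=
    Finset.sum_pos (fun i _ => pow_pos hy i) hne
  rw [div_le_div_iff₀ hSx hSy, Finset.mul_sum, Finset.mul_sum]
  apply Finset.sum_le_sum
  intro i hi
  have hi' : i ≤ n - 1 := by
    have := Finset.mem_range.mp hi; omega
  have e1 : x ^ (n - 1) * y ^ i = x ^ (n - 1 - i) * (x ^ i * y ^ i) := by
    rw [← mul_assoc, ← pow_add, Nat.sub_add_cancel hi']
  have e2 : y ^ (n - 1) * x ^ i = y ^ (n - 1 - i) * (x ^ i * y ^ i) := by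
    rw [← mul_assoc, mul_comm (y ^ (n-1-i)) (x ^ i), mul_assoc, ← pow_add,
      Nat.sub_add_cancel hi', mul_comm]
  rw [e1, e2]
  exact mul_le_mul_of_nonneg_right (pow_le_pow_left₀ hx.le hxy _)
    (by positivity)

theorem A_antitone_in_r (b : ℕ) (hb : 1 ≤ b) :
    AntitoneOn (fun r : ℝ => r * (1 - r) ^ (2 ^ b - 1) / (1 - (1 - r) ^ (2 ^ b)))
      (Ioo (0 : ℝ) 1) := by
  set n := 2 ^ b with hn
  have hn1 : 1 ≤ n := Nat.one_le_two_pow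
  have rw1 : ∀ r ∈ Ioo (0:ℝ) 1, r * (1 - r) ^ (n - 1) / (1 - (1 - r) ^ n)
      = (1 - r) ^ (n - 1) / ∑ i ∈ Finset.range n, (1 - r) ^ i := by
    intro r hr
    have hr0 : r ≠ 0 := ne_of_gt hr.1
    have hgeom : 1 - (1 - r) ^ n = r * ∑ i ∈ Finset.range n, (1 - r) ^ i := by
      rw [hn]; linear_combination geom_sum_mul (1 - r : ℝ) (2 ^ b)
    rw [hgeom, mul_comm r ((1 - r) ^ (n - 1)), mul_comm r, mul_div_mul_right _ _ hr0]
  intro r1 h1 r2 h2 h12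
  simp only
  rw [rw1 r1 h1, rw1 r2 h2]
  exact key_mono n hn1 (by linarith [h2.2] : (0:ℝ) < 1 - r2) (by linarith)
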